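/- Let A be an n×n real matrix with n ≥ 2 and let 1 ≤ N ≤ n. Then the variances of the unit vector trace estimators without and with replacement are related by Var(tr_{U₂}^N(A)) = ((n−N)/(n−1)) · Var(tr_{U₁}^N(A)); in particular they coincide when N = 1, and the without-replacement variance vanishes when N = n. -/

import Mathlib

open MeasureTheory Matrix Finset

set_option linter.unusedSectionVars false
set_option maxHeartbeats 1000000


noncomputable def unitVec (n : ℕ) (j : Fin n) : Fin n → ℝ :=
  fun k => Real.sqrt n * if k = j then 1 else 0

noncomputable def unitVectorEstimator (n N : ℕ) (A : Matrix (Fin n) (Fin n) ℝ)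
    (f : Fin N → Fin n) : ℝ :=
  (1 / (N : ℝ)) * ∑ i : Fin N, (unitVec n (f i)) ⬝ᵥ A.mulVec (unitVec n (f i))

noncomputable def withReplacementMeasure (n N : ℕ) : Measure (Fin N → Fin n) :=
  (Fintype.card (Fin N → Fin n) : ENNReal)⁻¹ • Measure.count

noncomputable def withoutReplacementMeasure (n N : ℕ) :
    Measure {f : Fin N → Fin n // Function.Injective f} :=
  (Fintype.card {f : Fin N → Fin n // Function.Injective f} : ENNReal)⁻¹ • Measure.count

noncomputable def unifM (α : Type) [Fintype α] [MeasurableSpace α] : Measure α :=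
  (Fintype.card α : ENNReal)⁻¹ • Measure.count

section unif
variable {α : Type} [Fintype α] [Nonempty α] [MeasurableSpace α] [MeasurableSingletonClass α]

instance : IsProbabilityMeasure (unifM α) := by
  constructor
  rw [unifM, Measure.smul_apply, Measure.count_apply_finite _ Set.finite_univ, smul_eq_mul]
  rw [Set.Finite.toFinset_univ, Finset.card_univ]
  rw [ENNReal.inv_mul_cancel] <;> simp [Fintype.card_ne_zero]

lemma integral_unifM (X : α → ℝ) :
    ∫ a, X a ∂(unifM α) = (Fintype.card α : ℝ)⁻¹ * ∑ a, X a := by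
  rw [integral_fintype Integrable.of_finite, Finset.mul_sum]
  congr 1; ext a
  rw [measureReal_def, unifM, Measure.smul_apply, Measure.count_singleton]
  simp [ENNReal.toReal_inv]

lemma variance_unifM (X : α → ℝ) :
    ProbabilityTheory.variance X (unifM α)
      = (Fintype.card α : ℝ)⁻¹ * ∑ a, (X a)^2
        - ((Fintype.card α : ℝ)⁻¹ * ∑ a, X a)^2 := by
  rw [ProbabilityTheory.variance_eq_sub MemLp.of_discrete]
  rw [show (X ^ 2 : α → ℝ) = fun a => (X a)^2 from rfl]
  rw [integral_unifM, integral_unifM]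

lemma variance_unifM_shift (X : α → ℝ) (m : ℝ) (hX : ∑ a, X a = 0) :
    ProbabilityTheory.variance (fun a => m + X a) (unifM α)
      = (Fintype.card α : ℝ)⁻¹ * ∑ a, (X a)^2 := by
  have hc : (Fintype.card α : ℝ) ≠ 0 := Nat.cast_ne_zero.mpr Fintype.card_ne_zero
  rw [variance_unifM]
  have h1 : ∑ a : α, (m + X a) = (Fintype.card α : ℝ) * m := by
    rw [Finset.sum_add_distrib, hX, Finset.sum_const, Finset.card_univ]
    simp [nsmul_eq_mul]
  have h2 : ∑ a : α, (m + X a)^2 = (Fintype.card α : ℝ) * m^2 + ∑ a, (X a)^2 := by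
    have : ∀ a : α, (m + X a)^2 = m^2 + (2*m) * X a + (X a)^2 := fun a => by ring
    simp only [this, Finset.sum_add_distrib, ← Finset.mul_sum, hX, mul_zero,
      Finset.sum_const, Finset.card_univ, nsmul_eq_mul, add_zero]
  rw [h1, h2]
  field_simp
  ring

end unif

section fib
variable {n N : ℕ} {α : Type} [Fintype α] (v : α → Fin N → Fin n)

lemma sum_fib1 (i : Fin N) (φ : Fin n → ℝ) :
    ∑ x : α, φ (v x i) = ∑ a : Fin n, ((univ.filter fun x => v x i = a).card : ℝ) * φ a := by
  rw [← Finset.sum_fiberwise univ (fun x => v x i) (fun x => φ (v x i))]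
  refine Finset.sum_congr rfl fun a _ => ?_
  rw [Finset.sum_congr rfl (fun x hx => by
    rw [Finset.mem_filter] at hx; rw [hx.2] : ∀ x ∈ univ.filter fun x => v x i = a,
      φ (v x i) = φ a)]
  rw [Finset.sum_const, nsmul_eq_mul]

lemma sum_fib2 (i j : Fin N) (φ ψ : Fin n → ℝ) :
    ∑ x : α, φ (v x i) * ψ (v x j)
      = ∑ p : Fin n × Fin n,
          ((univ.filter fun x => (v x i, v x j) = p).card : ℝ) * (φ p.1 * ψ p.2) := by
  rw [← Finset.sum_fiberwise univ (fun x => (v x i, v x j)) (fun x => φ (v x i) * ψ (v x j))]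
  refine Finset.sum_congr rfl fun p _ => ?_
  rw [Finset.sum_congr rfl (fun x hx => by
    rw [Finset.mem_filter] at hx
    rw [show v x i = p.1 from congrArg Prod.fst hx.2, show v x j = p.2 from congrArg Prod.snd hx.2]
    : ∀ x ∈ univ.filter fun x => (v x i, v x j) = p,
      φ (v x i) * ψ (v x j) = φ p.1 * ψ p.2)]
  rw [Finset.sum_const, nsmul_eq_mul]

lemma card_fib1_total (i : Fin N) :
    ∑ a : Fin n, (univ.filter fun x => v x i = a).card = Fintype.card α := by
  have h := Finset.sum_fiberwise univ (fun x => v x i) (fun _ => (1:ℕ))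
  simp only [Finset.sum_const, smul_eq_mul, mul_one] at h
  rw [h, Finset.card_univ]

lemma card_fib2_total (i j : Fin N) :
    ∑ p : Fin n × Fin n, (univ.filter fun x => (v x i, v x j) = p).card = Fintype.card α := by
  have h := Finset.sum_fiberwise univ (fun x => (v x i, v x j)) (fun _ => (1:ℕ))
  simp only [Finset.sum_const, smul_eq_mul, mul_one] at h
  rw [h, Finset.card_univ]

/-- If all single-coordinate fibers have the same cardinality, each has card `|α| / n`. -/
lemma fib1_card_const (hn : 0 < n) (i : Fin N)
    (H : ∀ a a' : Fin n, (univ.filter fun x => v x i = a).card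
      = (univ.filter fun x => v x i = a').card) (a : Fin n) :
    ((univ.filter fun x => v x i = a).card : ℝ) = (Fintype.card α : ℝ) / n := by
  have htot : n * (univ.filter fun x => v x i = a).card = Fintype.card α := by
    rw [← card_fib1_total v i]
    rw [Finset.sum_congr rfl fun a' _ => H a' a]
    simp [Finset.sum_const, mul_comm]
  have : ((n : ℝ)) * ((univ.filter fun x => v x i = a).card : ℝ) = (Fintype.card α : ℝ) := by
    exact_mod_cast congrArg (Nat.cast : ℕ → ℝ) htot
  field_simp [Nat.cast_ne_zero.mpr hn.ne']
  linarith [this]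

end fib

section sums
variable {n N : ℕ}

/-- Single-coordinate sum when all single fibers are equal. -/
lemma sum_single_eq {α : Type} [Fintype α] (v : α → Fin N → Fin n) (hn : 0 < n) (i : Fin N)
    (H : ∀ a a' : Fin n, (univ.filter fun x => v x i = a).card
      = (univ.filter fun x => v x i = a').card) (φ : Fin n → ℝ) :
    ∑ x : α, φ (v x i) = (Fintype.card α : ℝ) / n * ∑ a, φ a := by
  rw [sum_fib1 v i φ, Finset.mul_sum]
  exact Finset.sum_congr rfl fun a _ => by rw [fib1_card_const v hn i H a]

end sums
section fibeq
variable {n N : ℕ}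

/-- a permutation sending `a ↦ a'` and `b ↦ b'`. -/
lemma exists_perm_pair (a b a' b' : Fin n) (hab : a ≠ b) (hab' : a' ≠ b') :
    ∃ σ : Equiv.Perm (Fin n), σ a = a' ∧ σ b = b' := by
  set τ := Equiv.swap a a' with hτ
  refine ⟨τ.trans (Equiv.swap (τ b) b'), ?_, ?_⟩
  · have h1 : τ a = a' := Equiv.swap_apply_left a a'
    have hne : a' ≠ τ b := fun h => hab (τ.injective (h1.trans h))
    rw [Equiv.trans_apply, h1]
    exact Equiv.swap_apply_of_ne_of_ne hne hab'
  · simp only [Equiv.trans_apply, Equiv.swap_apply_left]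

-- full space fibers
lemma full_fib1_eq (i : Fin N) (a a' : Fin n) :
    (univ.filter fun f : Fin N → Fin n => f i = a).card
      = (univ.filter fun f : Fin N → Fin n => f i = a').card := by
  apply Finset.card_nbij' (fun f => Function.update f i a') (fun f => Function.update f i a)
  · intro f hf; simp [Function.update_self]
  · intro f hf; simp [Function.update_self]
  · intro f hf
    simp only [mem_coe, mem_filter, mem_univ, true_and] at hf
    funext k
    rcases eq_or_ne k i with rfl | hk
    · simp [Function.update_self, hf]
    · simp [Function.update_of_ne hk]
  · intro f hf
    simp only [mem_coe, mem_filter, mem_univ, true_and] at hf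
    funext k
    rcases eq_or_ne k i with rfl | hk
    · simp [Function.update_self, hf]
    · simp [Function.update_of_ne hk]

lemma full_fib2_eq (i j : Fin N) (hij : i ≠ j) (p p' : Fin n × Fin n) :
    (univ.filter fun f : Fin N → Fin n => (f i, f j) = p).card
      = (univ.filter fun f : Fin N → Fin n => (f i, f j) = p').card := by
  obtain ⟨a, b⟩ := p; obtain ⟨a', b'⟩ := p'
  apply Finset.card_nbij' (fun f => Function.update (Function.update f i a') j b')
    (fun f => Function.update (Function.update f i a) j b)
  · intro f hf
    simp only [mem_coe, mem_filter, mem_univ, true_and, Prod.mk.injEq]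
    constructor
    · rw [Function.update_of_ne hij, Function.update_self]
    · rw [Function.update_self]
  · intro f hf
    simp only [mem_coe, mem_filter, mem_univ, true_and, Prod.mk.injEq]
    constructor
    · rw [Function.update_of_ne hij, Function.update_self]
    · rw [Function.update_self]
  · intro f hf
    simp only [mem_coe, mem_filter, mem_univ, true_and, Prod.mk.injEq] at hf
    funext k
    dsimp only
    rcases eq_or_ne k i with rfl | hki
    · rw [Function.update_of_ne hij, Function.update_self, hf.1]
    · rcases eq_or_ne k j with rfl | hkj
      · rw [Function.update_self, hf.2]
      · rw [Function.update_of_ne hkj, Function.update_of_ne hki,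
          Function.update_of_ne hkj, Function.update_of_ne hki]
  · intro f hf
    simp only [mem_coe, mem_filter, mem_univ, true_and, Prod.mk.injEq] at hf
    funext k
    dsimp only
    rcases eq_or_ne k i with rfl | hki
    · rw [Function.update_of_ne hij, Function.update_self, hf.1]
    · rcases eq_or_ne k j with rfl | hkj
      · rw [Function.update_self, hf.2]
      · rw [Function.update_of_ne hkj, Function.update_of_ne hki,
          Function.update_of_ne hkj, Function.update_of_ne hki]

abbrev InjFun (n N : ℕ) := {f : Fin N → Fin n // Function.Injective f}

lemma inj_fib1_perm (σ : Equiv.Perm (Fin n)) (i : Fin N) (a : Fin n) :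
    (univ.filter fun x : InjFun n N => x.1 i = a).card
      = (univ.filter fun x : InjFun n N => x.1 i = σ a).card := by
  apply Finset.card_nbij' (fun x => ⟨σ ∘ x.1, σ.injective.comp x.2⟩)
    (fun x => ⟨σ.symm ∘ x.1, σ.symm.injective.comp x.2⟩)
  · intro x hx
    simp only [mem_coe, mem_filter, mem_univ, true_and] at hx ⊢
    simp [Function.comp, hx]
  · intro x hx
    simp only [mem_coe, mem_filter, mem_univ, true_and] at hx ⊢
    simp [Function.comp, hx]
  · intro x _; ext k; simp
  · intro x _; ext k; simp

lemma inj_fib2_perm (σ : Equiv.Perm (Fin n)) (i j : Fin N) (a b : Fin n) :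
    (univ.filter fun x : InjFun n N => (x.1 i, x.1 j) = (a, b)).card
      = (univ.filter fun x : InjFun n N => (x.1 i, x.1 j) = (σ a, σ b)).card := by
  apply Finset.card_nbij' (fun x => ⟨σ ∘ x.1, σ.injective.comp x.2⟩)
    (fun x => ⟨σ.symm ∘ x.1, σ.symm.injective.comp x.2⟩)
  · intro x hx
    simp only [mem_coe, mem_filter, mem_univ, true_and, Prod.mk.injEq] at hx ⊢
    simp [Function.comp, hx.1, hx.2]
  · intro x hx
    simp only [mem_coe, mem_filter, mem_univ, true_and, Prod.mk.injEq] at hx ⊢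
    constructor
    · simp [Function.comp]; rw [hx.1]; simp
    · simp [Function.comp]; rw [hx.2]; simp
  · intro x _; ext k; simp
  · intro x _; ext k; simp

lemma inj_fib2_diag (i j : Fin N) (hij : i ≠ j) (a : Fin n) :
    (univ.filter fun x : InjFun n N => (x.1 i, x.1 j) = (a, a)).card = 0 := by
  rw [Finset.card_eq_zero, Finset.filter_eq_empty_iff]
  rintro x -
  simp only [Prod.mk.injEq, not_and]
  intro h1 h2
  exact hij (x.2 (h1.trans h2.symm))

end fibeq
section fib2
variable {n N : ℕ} {α : Type} [Fintype α] (v : α → Fin N → Fin n)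

lemma fib2_card_const_all (hn : 0 < n) (i j : Fin N)
    (H : ∀ p p' : Fin n × Fin n, (univ.filter fun x => (v x i, v x j) = p).card
      = (univ.filter fun x => (v x i, v x j) = p').card) (p : Fin n × Fin n) :
    ((univ.filter fun x => (v x i, v x j) = p).card : ℝ) = (Fintype.card α : ℝ) / (n^2) := by
  have htot : n^2 * (univ.filter fun x => (v x i, v x j) = p).card = Fintype.card α := by
    rw [← card_fib2_total v i j, Finset.sum_congr rfl fun p' _ => H p' p]
    simp [Finset.sum_const, Finset.card_univ, mul_comm, pow_two]
  have h2 : ((n:ℝ))^2 * ((univ.filter fun x => (v x i, v x j) = p).card : ℝ)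
      = (Fintype.card α : ℝ) := by exact_mod_cast congrArg (Nat.cast : ℕ → ℝ) htot
  have hne : ((n:ℝ))^2 ≠ 0 := pow_ne_zero _ (Nat.cast_ne_zero.mpr hn.ne')
  field_simp
  linarith [h2]

lemma fib2_card_const_off (hn : 2 ≤ n) (i j : Fin N)
    (Hdiag : ∀ a : Fin n, (univ.filter fun x => (v x i, v x j) = (a, a)).card = 0)
    (Hoff : ∀ a b a' b' : Fin n, a ≠ b → a' ≠ b' →
      (univ.filter fun x => (v x i, v x j) = (a, b)).card
        = (univ.filter fun x => (v x i, v x j) = (a', b')).card)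
    {a b : Fin n} (hab : a ≠ b) :
    ((univ.filter fun x => (v x i, v x j) = (a, b)).card : ℝ)
      = (Fintype.card α : ℝ) / (n * ((n:ℝ) - 1)) := by
  set c := (univ.filter fun x => (v x i, v x j) = (a, b)).card with hc
  have hinner : ∀ a' : Fin n,
      ∑ b' : Fin n, (univ.filter fun x => (v x i, v x j) = (a', b')).card = (n - 1) * c := by
    intro a'
    rw [← Finset.sum_erase (univ : Finset (Fin n))
      (f := fun b' => (univ.filter fun x => (v x i, v x j) = (a', b')).card)
      (a := a') (Hdiag a')]
    rw [Finset.sum_congr rfl fun b' hb' => Hoff a' b' a b (Finset.ne_of_mem_erase hb').symm hab]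
    rw [Finset.sum_const, Finset.card_erase_of_mem (mem_univ _), Finset.card_univ,
      Fintype.card_fin, smul_eq_mul]
  have htot : n * ((n - 1) * c) = Fintype.card α := by
    rw [← card_fib2_total v i j, Fintype.sum_prod_type]
    rw [Finset.sum_congr rfl fun a' _ => hinner a']
    simp [Finset.sum_const, Finset.card_univ, mul_comm]
  have h2 : (n : ℝ) * (((n:ℝ) - 1) * (c : ℝ)) = (Fintype.card α : ℝ) := by
    have := congrArg (Nat.cast : ℕ → ℝ) htot
    push_cast [Nat.cast_sub (by omega : 1 ≤ n)] at this
    convert this using 2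
  have hn0 : (n : ℝ) ≠ 0 := Nat.cast_ne_zero.mpr (by omega)
  have hn1 : (n : ℝ) - 1 ≠ 0 := by
    have : (2:ℝ) ≤ (n:ℝ) := by exact_mod_cast hn
    linarith
  field_simp
  linarith [h2]

lemma sum_pair_all (hn : 0 < n) (i j : Fin N)
    (H : ∀ p p' : Fin n × Fin n, (univ.filter fun x => (v x i, v x j) = p).card
      = (univ.filter fun x => (v x i, v x j) = p').card)
    (Hconst : ∀ p : Fin n × Fin n, ((univ.filter fun x => (v x i, v x j) = p).card : ℝ)
      = (Fintype.card α : ℝ) / (n^2))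
    (φ ψ : Fin n → ℝ) :
    ∑ x : α, φ (v x i) * ψ (v x j)
      = (Fintype.card α : ℝ) / (n^2) * ((∑ a, φ a) * (∑ b, ψ b)) := by
  rw [sum_fib2 v i j φ ψ, Finset.sum_congr rfl fun p _ => by rw [Hconst p]]
  rw [← Finset.mul_sum]
  congr 1
  rw [Finset.sum_mul_sum, Fintype.sum_prod_type]

lemma sum_pair_off (hn : 2 ≤ n) (i j : Fin N)
    (Hdiag : ∀ a : Fin n, (univ.filter fun x => (v x i, v x j) = (a, a)).card = 0)
    (Hconst : ∀ a b : Fin n, a ≠ b → ((univ.filter fun x => (v x i, v x j) = (a, b)).card : ℝ)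
      = (Fintype.card α : ℝ) / (n * ((n:ℝ) - 1)))
    (φ : Fin n → ℝ) :
    ∑ x : α, φ (v x i) * φ (v x j)
      = (Fintype.card α : ℝ) / (n * ((n:ℝ) - 1))
          * ((∑ a, φ a)^2 - ∑ a, φ a * φ a) := by
  set C := (Fintype.card α : ℝ) / (n * ((n:ℝ) - 1)) with hC
  rw [sum_fib2 v i j φ φ, Fintype.sum_prod_type]
  have hinner : ∀ a : Fin n,
      ∑ b : Fin n, ((univ.filter fun x => (v x i, v x j) = (a, b)).card : ℝ) * (φ a * φ b)
        = C * (φ a * ((∑ b, φ b) - φ a)) := by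
    intro a
    rw [← Finset.sum_erase (univ : Finset (Fin n))
      (f := fun b => ((univ.filter fun x => (v x i, v x j) = (a, b)).card : ℝ) * (φ a * φ b))
      (a := a) (by simp only [Hdiag a, Nat.cast_zero, zero_mul])]
    have step : ∀ b ∈ (univ : Finset (Fin n)).erase a,
        ((univ.filter fun x => (v x i, v x j) = (a, b)).card : ℝ) * (φ a * φ b)
          = C * (φ a * φ b) := fun b hb => by rw [Hconst a b (Finset.ne_of_mem_erase hb).symm]
    rw [Finset.sum_congr rfl step, ← Finset.mul_sum, ← Finset.mul_sum,
      Finset.sum_erase_eq_sub (mem_univ a)]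
  dsimp only
  rw [Finset.sum_congr rfl fun a _ => hinner a, ← Finset.mul_sum]
  congr 1
  rw [Finset.sum_congr rfl (fun a _ => mul_sub (φ a) _ _), Finset.sum_sub_distrib,
    ← Finset.sum_mul, pow_two]

lemma sum_sq_swap (h : Fin n → ℝ) :
    ∑ x : α, (∑ i, h (v x i))^2 = ∑ i, ∑ j, ∑ x : α, h (v x i) * h (v x j) := by
  have : ∀ x : α, (∑ i, h (v x i))^2 = ∑ i, ∑ j, h (v x i) * h (v x j) := by
    intro x
    rw [pow_two, Finset.sum_mul_sum]
  rw [Finset.sum_congr rfl fun x _ => this x, Finset.sum_comm]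
  exact Finset.sum_congr rfl fun i _ => Finset.sum_comm


end fib2

section final
variable {n N : ℕ}

lemma quadform (n : ℕ) (A : Matrix (Fin n) (Fin n) ℝ) (j : Fin n) :
    unitVec n j ⬝ᵥ A.mulVec (unitVec n j) = n * A j j := by
  simp only [unitVec, dotProduct, Matrix.mulVec, mul_ite, ite_mul, mul_zero, zero_mul,
    mul_one, one_mul]
  rw [Finset.sum_ite_eq' univ j]
  simp only [mem_univ, if_true]
  rw [Finset.mul_sum]
  simp only [mul_ite, mul_zero]
  rw [Finset.sum_ite_eq' univ j]
  simp only [mem_univ, if_true]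
  rw [show Real.sqrt n * (A j j * Real.sqrt n) = (Real.sqrt n * Real.sqrt n) * A j j by ring,
    Real.mul_self_sqrt (Nat.cast_nonneg n)]

-- derived fiber constants, injective case
lemma inj_fib1_eq (i : Fin N) (a a' : Fin n) :
    (univ.filter fun x : InjFun n N => x.1 i = a).card
      = (univ.filter fun x : InjFun n N => x.1 i = a').card := by
  have := inj_fib1_perm (Equiv.swap a a') i a
  rwa [Equiv.swap_apply_left] at this

lemma inj_fib2_eq (i j : Fin N) (a b a' b' : Fin n) (hab : a ≠ b) (hab' : a' ≠ b') :
    (univ.filter fun x : InjFun n N => (x.1 i, x.1 j) = (a, b)).card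
      = (univ.filter fun x : InjFun n N => (x.1 i, x.1 j) = (a', b')).card := by
  obtain ⟨σ, h1, h2⟩ := exists_perm_pair a b a' b' hab hab'
  have := inj_fib2_perm σ i j a b
  rwa [h1, h2] at this

/-- linear sum vanishes for centered `h` -/
lemma sum_lin_zero {α : Type} [Fintype α] (v : α → Fin N → Fin n) (hn : 0 < n)
    (H1 : ∀ (i : Fin N) (a a' : Fin n), (univ.filter fun x => v x i = a).card
      = (univ.filter fun x => v x i = a').card)
    (h : Fin n → ℝ) (hh : ∑ a, h a = 0) :
    ∑ x : α, ∑ i, h (v x i) = 0 := by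
  rw [Finset.sum_comm]
  rw [Finset.sum_congr rfl fun i _ => sum_single_eq v hn i (H1 i) h]
  simp [hh]

lemma full_sum_sq (hn : 0 < n) (h : Fin n → ℝ) (hh : ∑ a, h a = 0) :
    ∑ f : Fin N → Fin n, (∑ i, h (f i))^2
      = (Fintype.card (Fin N → Fin n) : ℝ) / n * ((N:ℝ) * ∑ a, h a * h a) := by
  rw [sum_sq_swap (fun f => f) h]
  have Hi : ∀ i : Fin N, ∑ j, ∑ f : Fin N → Fin n, h (f i) * h (f j)
      = (Fintype.card (Fin N → Fin n) : ℝ) / n * ∑ a, h a * h a := by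
    intro i
    rw [← Finset.add_sum_erase univ _ (mem_univ i)]
    have h1 : ∑ f : Fin N → Fin n, h (f i) * h (f i)
        = (Fintype.card (Fin N → Fin n) : ℝ) / n * ∑ a, h a * h a :=
      sum_single_eq (fun f => f) hn i (full_fib1_eq i) (fun a => h a * h a)
    have h2 : ∀ j ∈ univ.erase i, ∑ f : Fin N → Fin n, h (f i) * h (f j) = 0 := by
      intro j hj
      have hij : i ≠ j := (Finset.ne_of_mem_erase hj).symm
      rw [sum_pair_all (fun f => f) hn i j (full_fib2_eq i j hij)
        (fib2_card_const_all (fun f => f) hn i j (full_fib2_eq i j hij)) h h, hh]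
      ring
    rw [Finset.sum_congr rfl h2, Finset.sum_const, h1]
    simp
  rw [Finset.sum_congr rfl fun i _ => Hi i, Finset.sum_const, card_univ, Fintype.card_fin]
  rw [nsmul_eq_mul]
  ring

lemma inj_sum_sq (hn : 2 ≤ n) (hN : 1 ≤ N) (h : Fin n → ℝ) (hh : ∑ a, h a = 0) :
    ∑ x : InjFun n N, (∑ i, h (x.1 i))^2
      = (N:ℝ) * ((Fintype.card (InjFun n N) : ℝ) / n * ∑ a, h a * h a)
        - (N:ℝ) * (((N:ℝ) - 1) *
            ((Fintype.card (InjFun n N) : ℝ) / (n * ((n:ℝ) - 1)) * ∑ a, h a * h a)) := by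
  have hn0 : 0 < n := by omega
  rw [sum_sq_swap (fun x : InjFun n N => x.1) h]
  have Hi : ∀ i : Fin N, ∑ j, ∑ x : InjFun n N, h (x.1 i) * h (x.1 j)
      = (Fintype.card (InjFun n N) : ℝ) / n * ∑ a, h a * h a
        - ((N:ℝ) - 1) *
            ((Fintype.card (InjFun n N) : ℝ) / (n * ((n:ℝ) - 1)) * ∑ a, h a * h a) := by
    intro i
    rw [← Finset.add_sum_erase univ _ (mem_univ i)]
    have h1 : ∑ x : InjFun n N, h (x.1 i) * h (x.1 i)
        = (Fintype.card (InjFun n N) : ℝ) / n * ∑ a, h a * h a :=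
      sum_single_eq (fun x : InjFun n N => x.1) hn0 i (inj_fib1_eq i) (fun a => h a * h a)
    have h2 : ∀ j ∈ univ.erase i, ∑ x : InjFun n N, h (x.1 i) * h (x.1 j)
        = -((Fintype.card (InjFun n N) : ℝ) / (n * ((n:ℝ) - 1)) * ∑ a, h a * h a) := by
      intro j hj
      have hij : i ≠ j := (Finset.ne_of_mem_erase hj).symm
      rw [sum_pair_off (fun x : InjFun n N => x.1) hn i j (inj_fib2_diag i j hij)
        (fun a b hab => fib2_card_const_off (fun x : InjFun n N => x.1) hn i j
          (inj_fib2_diag i j hij) (fun a b a' b' h1 h2 => inj_fib2_eq i j a b a' b' h1 h2) hab)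
        h, hh]
      ring
    rw [Finset.sum_congr rfl h2, Finset.sum_const, h1,
      Finset.card_erase_of_mem (mem_univ i), Finset.card_univ, Fintype.card_fin, nsmul_eq_mul]
    rw [Nat.cast_sub hN]
    push_cast
    ring
  rw [Finset.sum_congr rfl fun i _ => Hi i, Finset.sum_const, card_univ, Fintype.card_fin,
    nsmul_eq_mul]
  ring

lemma variance_est {α : Type} [Fintype α] [Nonempty α] [MeasurableSpace α]
    [MeasurableSingletonClass α] (v : α → Fin N → Fin n) (m : ℝ) (h : Fin n → ℝ)
    (hN : 0 < N) (hsum : ∑ x : α, ∑ i, h (v x i) = 0) :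
    ProbabilityTheory.variance (fun x => m + (1 / (N:ℝ)) * ∑ i, h (v x i)) (unifM α)
      = (Fintype.card α : ℝ)⁻¹ * ((1 / (N:ℝ))^2 * ∑ x : α, (∑ i, h (v x i))^2) := by
  rw [variance_unifM_shift (fun x => (1 / (N:ℝ)) * ∑ i, h (v x i)) m
    (by rw [← Finset.mul_sum, hsum, mul_zero])]
  rw [Finset.sum_congr rfl (fun x _ => mul_pow (1 / (N:ℝ)) _ 2), ← Finset.mul_sum]

end final


/-- the variances of the unit vector trace estimators without and with
replacement are related by `Var(tr_{U₂}^N(A)) = ((n−N)/(n−1)) Var(tr_{U₁}^N(A))`; in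
particular they coincide when `N = 1`, and the without-replacement variance vanishes
when `N = n`. -/
theorem unit_vector_variance_relation (n N : ℕ) (A : Matrix (Fin n) (Fin n) ℝ)
    (hn : 2 ≤ n) (hN : 1 ≤ N) (hNn : N ≤ n) :
    (ProbabilityTheory.variance (fun f => unitVectorEstimator n N A f.1)
        (withoutReplacementMeasure n N)
      = (((n : ℝ) - N) / ((n : ℝ) - 1)) *
          ProbabilityTheory.variance (unitVectorEstimator n N A)
            (withReplacementMeasure n N)) ∧
    (N = 1 →
      ProbabilityTheory.variance (fun f => unitVectorEstimator n N A f.1)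
          (withoutReplacementMeasure n N)
        = ProbabilityTheory.variance (unitVectorEstimator n N A)
            (withReplacementMeasure n N)) ∧
    (N = n →
      ProbabilityTheory.variance (fun f => unitVectorEstimator n N A f.1)
          (withoutReplacementMeasure n N) = 0) := by
  have hn0 : 0 < n := by omega
  have hN0 : 0 < N := hN
  have hnR : (n:ℝ) ≠ 0 := Nat.cast_ne_zero.mpr hn0.ne'
  have hNR : (N:ℝ) ≠ 0 := Nat.cast_ne_zero.mpr hN0.ne'
  have hn1 : (n:ℝ) - 1 ≠ 0 := by
    have : (2:ℝ) ≤ (n:ℝ) := by exact_mod_cast hn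
    linarith
  set g : Fin n → ℝ := fun a => (n:ℝ) * A a a with hg
  set m : ℝ := (∑ a, g a) / n with hm
  set h : Fin n → ℝ := fun a => g a - m with hh'
  have hh : ∑ a, h a = 0 := by
    simp only [hh', Finset.sum_sub_distrib, Finset.sum_const, card_univ, Fintype.card_fin,
      nsmul_eq_mul, hm]
    field_simp
    ring
  have hest : ∀ f : Fin N → Fin n,
      unitVectorEstimator n N A f = m + (1/(N:ℝ)) * ∑ i, h (f i) := by
    intro f
    rw [unitVectorEstimator, Finset.sum_congr rfl fun i _ => quadform n A (f i)]
    have hterm : ∀ i : Fin N, (n:ℝ) * A (f i) (f i) = h (f i) + m := fun i => by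
      simp [hh', hg]
    rw [Finset.sum_congr rfl fun i _ => hterm i, Finset.sum_add_distrib, Finset.sum_const,
      card_univ, Fintype.card_fin, nsmul_eq_mul]
    field_simp
    ring
  haveI : Nonempty (Fin N → Fin n) := ⟨fun _ => ⟨0, hn0⟩⟩
  haveI : Nonempty (InjFun n N) :=
    ⟨⟨fun i => ⟨i.1, lt_of_lt_of_le i.2 hNn⟩, fun a b hab => by
      simpa [Fin.ext_iff] using congrArg Fin.val hab⟩⟩
  have hmeas1 : withReplacementMeasure n N = unifM (Fin N → Fin n) := rfl
  have hmeas2 : withoutReplacementMeasure n N = unifM (InjFun n N) := rfl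
  have hI : (Fintype.card (InjFun n N) : ℝ) ≠ 0 := Nat.cast_ne_zero.mpr Fintype.card_ne_zero
  have hW : (Fintype.card (Fin N → Fin n) : ℝ) ≠ 0 := Nat.cast_ne_zero.mpr Fintype.card_ne_zero
  have key : ProbabilityTheory.variance (fun f => unitVectorEstimator n N A f.1)
        (withoutReplacementMeasure n N)
      = (((n : ℝ) - N) / ((n : ℝ) - 1)) *
          ProbabilityTheory.variance (unitVectorEstimator n N A)
            (withReplacementMeasure n N) := by
    rw [hmeas1, hmeas2]
    rw [show (fun f : InjFun n N => unitVectorEstimator n N A f.1)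
        = fun x : InjFun n N => m + (1/(N:ℝ)) * ∑ i, h (x.1 i) from funext fun x => hest x.1]
    rw [show unitVectorEstimator n N A = fun f => m + (1/(N:ℝ)) * ∑ i, h (f i) from
      funext hest]
    rw [variance_est (fun x : InjFun n N => x.1) m h hN0
      (sum_lin_zero (fun x : InjFun n N => x.1) hn0 inj_fib1_eq h hh)]
    rw [variance_est (fun f : Fin N → Fin n => f) m h hN0
      (sum_lin_zero (fun f : Fin N → Fin n => f) hn0 full_fib1_eq h hh)]
    rw [inj_sum_sq hn hN h hh, full_sum_sq hn0 h hh]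
    field_simp
    ring
  refine ⟨key, fun h1 => ?_, fun h2 => ?_⟩
  · rw [key]
    subst h1
    norm_num [div_self hn1]
  · rw [key]
    subst h2
    simp
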